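/- Let G be a c-valued group. For every f ∈ G with f ≠ 1, the centralizer C(f) = {g ∈ G : f*g = g*f} is an Abelian subgroup of G. -/
import Mathlib


variable {G : Type*} [Group G]

/-- `f ≺ g` : strict part of the dominance relation. -/
def vlt (le : G → G → Prop) (f g : G) : Prop := le f g ∧ ¬ le g f

/-- `f ≍ g` : equivalence induced by the dominance relation. -/
def veq (le : G → G → Prop) (f g : G) : Prop := le f g ∧ le g f

/-- A dominance relation on a group `G`, making it a valued group:
a reflexive, transitive, total relation satisfying D1-D4. -/
structure IsValuation (le : G → G → Prop) : Prop where
  refl : ∀ f : G, le f f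
  trans : ∀ f g h : G, le f g → le g h → le f h
  total : ∀ f g : G, le f g ∨ le g f
  d1 : ∀ f : G, f ≠ 1 → vlt le 1 f
  d2 : ∀ f g : G, le (f * g) f ∨ le (f * g) g
  d3 : ∀ f g h : G, le f g → le (h * f * h⁻¹) (h * g * h⁻¹)
  d4 : ∀ f : G, veq le f f⁻¹

/-- A c-dominance relation: a dominance relation moreover satisfying D5 and D6. -/
structure IsCValuation (le : G → G → Prop) extends IsValuation le : Prop where
  d5 : ∀ f g : G, f ≠ 1 → g ≠ 1 → f * g = g * f → veq le f g
  d6 : ∀ f g : G, f ≠ 1 → g ≠ 1 → veq le f g → vlt le (f⁻¹ * g⁻¹ * f * g) f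

/-- Proposition 2.12: in a c-valued group, the centralizer of any `f ≠ 1` is Abelian. -/
theorem centralizer_abelian (le : G → G → Prop) (hv : IsCValuation le)
    (f : G) (hf : f ≠ 1) :
    ∀ g h : G, f * g = g * f → f * h = h * f → g * h = h * g := by
  intro g h hg hh
  by_cases hg1 : g = 1
  · simp [hg1]
  by_cases hh1 : h = 1
  · simp [hh1]
  set c := g⁻¹ * h⁻¹ * g * h with hc
  by_cases hc1 : c = 1
  · calc g * h = h * g * (g⁻¹ * h⁻¹ * g * h) := by group
    _ = h * g := by rw [← hc, hc1, mul_one]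
  exfalso
  have hgf : veq le g f := hv.d5 g f hg1 hf (by rw [hg])
  have hhf : veq le h f := hv.d5 h f hh1 hf (by rw [hh])
  have hgh : veq le g h := ⟨hv.trans _ _ _ hgf.1 hhf.2, hv.trans _ _ _ hhf.1 hgf.2⟩
  have hlt : vlt le c g := hv.d6 g h hg1 hh1 hgh
  -- c commutes with f
  have hcf : f * c = c * f := by
    have hgf' : f * g⁻¹ = g⁻¹ * f := by
      calc f * g⁻¹ = g⁻¹ * (g * f) * g⁻¹ := by group
      _ = g⁻¹ * (f * g) * g⁻¹ := by rw [← hg]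
      _ = g⁻¹ * f := by group
    have hhf' : f * h⁻¹ = h⁻¹ * f := by
      calc f * h⁻¹ = h⁻¹ * (h * f) * h⁻¹ := by group
      _ = h⁻¹ * (f * h) * h⁻¹ := by rw [← hh]
      _ = h⁻¹ * f := by group
    rw [hc]
    calc f * (g⁻¹ * h⁻¹ * g * h) = (f * g⁻¹) * h⁻¹ * g * h := by group
    _ = g⁻¹ * (f * h⁻¹) * g * h := by rw [hgf']; group
    _ = g⁻¹ * h⁻¹ * (f * g) * h := by rw [hhf']; group
    _ = g⁻¹ * h⁻¹ * g * (f * h) := by rw [hg]; group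
    _ = g⁻¹ * h⁻¹ * g * h * f := by rw [hh]; group
  have hcg : veq le c g := by
    have hcf2 : veq le c f := hv.d5 c f hc1 hf (by rw [← hcf])
    exact ⟨hv.trans _ _ _ hcf2.1 hgf.2, hv.trans _ _ _ hgf.1 hcf2.2⟩
  exact hlt.2 hcg.2
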